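/- Projective elements of the Tamari poset are multiplicative for the over product: P(x/y) = P(x)/P(y), where P(t) is the sum of all trees ≤ t and the over product of two sums is defined by applying / to pairs of terms. -/

import Mathlib

/-- Planar binary trees: a leaf `∘` or an ordered pair of planar binary trees. -/
inductive PBT : Type
  | leaf : PBT
  | node : PBT → PBT → PBT
deriving DecidableEq

namespace PBT

/-- The degree: the number of internal vertices. -/
def deg : PBT → ℕ
  | leaf => 0
  | node l r => deg l + deg r + 1

/-- The over product `x/y`: graft the root of `x` onto the leftmost leaf of `y`. -/
def overProd (x : PBT) : PBT → PBT
  | leaf => x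
  | node l r => node (overProd x l) r

/-- The under product `x\y`: graft the root of `y` onto the rightmost leaf of `x`. -/
def under : PBT → PBT → PBT
  | leaf, y => y
  | node l r, y => node l (under r y)

/-- Left-right reversal: swap the two subtrees at every internal vertex. -/
def rev : PBT → PBT
  | leaf => leaf
  | node l r => node (rev r) (rev l)

/-- `move x y` : `y` is obtained from `x` by one elementary Tamari move,
replacing a subtree `(a (b c))` by `((a b) c)` (a right rotation, going down). -/
inductive move : PBT → PBT → Prop
  | rot (a b c : PBT) : move (node a (node b c)) (node (node a b) c)
  | left {a a' : PBT} (b : PBT) : move a a' → move (node a b) (node a' b)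
  | right (a : PBT) {b b' : PBT} : move b b' → move (node a b) (node a b')

/-- The Tamari order: `x ≤ y` iff `x` is obtained from `y` by a sequence of
elementary moves. -/
def tle (x y : PBT) : Prop := Relation.ReflTransGen move y x

/-- The left comb of degree `n`. -/
def leftComb : ℕ → PBT
  | 0 => leaf
  | n+1 => node (leftComb n) leaf

/-- The right comb of degree `n`. -/
def rightComb : ℕ → PBT
  | 0 => leaf
  | n+1 => node leaf (rightComb n)

end PBT

namespace PBT

lemma deg_over (a : PBT) : ∀ b, (a.overProd b).deg = a.deg + b.deg
  | leaf => by simp [overProd, deg]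
  | node l r => by simp [overProd, deg, deg_over a l]; ring

lemma move_deg {x y : PBT} (h : move x y) : x.deg = y.deg := by
  induction h with
  | rot a b c => simp [deg]; ring
  | left b _ ih => simp [deg, ih]
  | right a _ ih => simp [deg, ih]

lemma tle_deg {x y : PBT} (h : tle x y) : x.deg = y.deg := by
  induction h with
  | refl => rfl
  | tail _ hm ih => rw [← move_deg hm]; exact ih

lemma move_over_right {a a' : PBT} (h : move a a') : ∀ b, move (a.overProd b) (a'.overProd b)
  | leaf => h
  | node l r => move.left r (move_over_right h l)

lemma move_over_left (a : PBT) {b b' : PBT} (h : move b b') : move (a.overProd b) (a.overProd b') := by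
  induction h with
  | rot p q r => exact move.rot (a.overProd p) q r
  | left c _ ih => exact move.left c ih
  | right p hm _ => exact move.right (a.overProd p) hm

lemma move_over_split : ∀ (b a z : PBT), move (a.overProd b) z →
    (∃ a', move a a' ∧ z = a'.overProd b) ∨ (∃ b', move b b' ∧ z = a.overProd b')
  | leaf, a, z, h => Or.inl ⟨z, h, rfl⟩
  | node l r, a, z, h => by
    cases h with
    | rot A B C => exact Or.inr ⟨node (node l B) C, move.rot l B C, rfl⟩
    | left c hm =>
      rcases move_over_split l a _ hm with ⟨a', ha, rfl⟩ | ⟨l', hl, rfl⟩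
      · exact Or.inl ⟨a', ha, rfl⟩
      · exact Or.inr ⟨node l' r, move.left r hl, rfl⟩
    | right _ hm => exact Or.inr ⟨node l _, move.right l hm, rfl⟩

lemma over_inj : ∀ (b b' a a' : PBT), a.overProd b = a'.overProd b' → b.deg = b'.deg → a = a' ∧ b = b'
  | leaf, leaf, a, a', h, _ => ⟨h, rfl⟩
  | leaf, node l' r', a, a', h, hd => by simp [deg] at hd
  | node l r, leaf, a, a', h, hd => by simp [deg] at hd
  | node l r, node l' r', a, a', h, hd => by
    simp only [overProd, node.injEq] at h
    obtain ⟨h1, rfl⟩ := h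
    have hld : l.deg = l'.deg := by simp [deg] at hd; omega
    obtain ⟨rfl, rfl⟩ := over_inj l l' a a' h1 hld
    exact ⟨rfl, rfl⟩

end PBT

/-- Projective elements are multiplicative for the over product:
`P(x/y) = P(x)/P(y)`. Concretely, `a/b ≤ x/y` whenever `a ≤ x` and `b ≤ y`,
and every `z ≤ x/y` is uniquely of the form `a/b` with `a ≤ x`, `b ≤ y`. -/
theorem stmt17 (x y : PBT) :
    (∀ a b : PBT, PBT.tle a x → PBT.tle b y → PBT.tle (a.overProd b) (x.overProd y)) ∧
    (∀ z : PBT, PBT.tle z (x.overProd y) →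
      ∃! p : PBT × PBT, PBT.tle p.1 x ∧ PBT.tle p.2 y ∧ z = p.1.overProd p.2) := by
  constructor
  · intro a b ha hb
    have h1 : Relation.ReflTransGen PBT.move (x.overProd y) (a.overProd y) := by
      induction ha with
      | refl => exact .refl
      | tail _ hm ih => exact ih.tail (PBT.move_over_right hm y)
    have h2 : Relation.ReflTransGen PBT.move (a.overProd y) (a.overProd b) := by
      induction hb with
      | refl => exact .refl
      | tail _ hm ih => exact ih.tail (PBT.move_over_left a hm)
    exact h1.trans h2
  · intro z hz
    have hex : ∃ a b, PBT.tle a x ∧ PBT.tle b y ∧ z = a.overProd b := by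
      induction hz with
      | refl => exact ⟨x, y, .refl, .refl, rfl⟩
      | tail _ hm ih =>
        obtain ⟨a, b, ha, hb, rfl⟩ := ih
        rcases PBT.move_over_split b a _ hm with ⟨a', h', rfl⟩ | ⟨b', h', rfl⟩
        · exact ⟨a', b, ha.tail h', hb, rfl⟩
        · exact ⟨a, b', ha, hb.tail h', rfl⟩
    obtain ⟨a, b, ha, hb, rfl⟩ := hex
    refine ⟨(a, b), ⟨ha, hb, rfl⟩, ?_⟩
    rintro ⟨a', b'⟩ ⟨ha', hb', heq⟩
    have hd : b'.deg = b.deg := by rw [PBT.tle_deg hb', PBT.tle_deg hb]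
    obtain ⟨h1, h2⟩ := PBT.over_inj b' b a' a heq.symm hd
    simp [h1, h2]
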